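/- Fix a real number ε with 0<ε<1, and for integer L>1 consider the function F(N) = (1−ε^N)^L / N over positive integers N. Then the maximizing N is Θ(ln L) and the maximum value max_N F(N) is Θ(ln(1/ε) / ln L) as L→∞; in particular there are positive constants c_1, c_2, c_3, c_4 (depending only on ε) such that for all sufficiently large L, some N with c_1 ln L ≤ N ≤ c_2 ln L attains the maximum and c_3 ln(1/ε)/ln L ≤ max_N F(N) ≤ c_4 ln(1/ε)/ln L. -/

import Mathlib

/-- For `0 ≤ t ≤ 1/2` we have `exp (-(2t)) ≤ 1 - t`. -/
lemma aux_exp_neg_two_mul (t : ℝ) (h0 : 0 ≤ t) (h2 : t ≤ 1/2) :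
    Real.exp (-(2*t)) ≤ 1 - t := by
  have h := Real.add_one_le_exp (2*t)
  have hpos := Real.exp_pos (2*t)
  have hmul : Real.exp (-(2*t)) * Real.exp (2*t) = 1 := by
    rw [← Real.exp_add]; norm_num
  nlinarith [Real.exp_pos (-(2*t))]

/-- Cubic lower bound for `exp`. -/
lemma aux_cube_le_exp (s : ℝ) (h : 0 ≤ s) : s^3 ≤ 27 * Real.exp s := by
  have h1 : s/3 + 1 ≤ Real.exp (s/3) := Real.add_one_le_exp (s/3)
  have h2 : Real.exp (s/3) ^ 3 = Real.exp s := by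
    rw [← Real.exp_nat_mul]; congr 1; push_cast; ring
  have h3 : (s/3)^3 ≤ Real.exp (s/3) ^ 3 := by
    apply pow_le_pow_left₀ (by positivity)
    linarith
  nlinarith

/-- `log x ≤ 2 √x` for `x ≥ 1`. -/
lemma aux_log_le_two_sqrt (x : ℝ) (h : 1 ≤ x) : Real.log x ≤ 2 * Real.sqrt x := by
  have h0 : (0:ℝ) < x := by linarith
  have hs : 0 < Real.sqrt x := Real.sqrt_pos.mpr h0
  have h1 : Real.log (Real.sqrt x) ≤ Real.sqrt x - 1 := Real.log_le_sub_one_of_pos hs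
  have h2 : Real.log (Real.sqrt x) = Real.log x / 2 := Real.log_sqrt h0.le
  linarith

lemma aux_exp_two_le_eight : Real.exp 2 ≤ 8 := by
  have h := Real.exp_one_lt_d9
  have h2 : Real.exp 2 = Real.exp 1 * Real.exp 1 := by
    rw [← Real.exp_add]; norm_num
  nlinarith [Real.exp_pos 1]

set_option maxHeartbeats 1000000 in
/-- Fix `0 < ε < 1` and for an integer `L > 1` consider
`F(N) = (1-ε^N)^L / N` over positive integers `N`.  Then the maximizing `N` is
`Θ(ln L)` and the maximum value is `Θ(ln(1/ε) / ln L)` as `L → ∞`: there are positive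
constants `c₁, c₂, c₃, c₄` depending only on `ε` such that for all sufficiently large
`L`, some `N` with `c₁ ln L ≤ N ≤ c₂ ln L` attains the maximum and
`c₃ ln(1/ε)/ln L ≤ max_N F(N) ≤ c₄ ln(1/ε)/ln L`. -/
theorem stmt4 (ε : ℝ) (hε : 0 < ε) (hε1 : ε < 1) :
    ∃ c₁ c₂ c₃ c₄ : ℝ, 0 < c₁ ∧ 0 < c₂ ∧ 0 < c₃ ∧ 0 < c₄ ∧
      ∃ L₀ : ℕ, 1 < L₀ ∧ ∀ L : ℕ, L₀ ≤ L →
        ∃ N : ℕ, 1 ≤ N ∧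
          c₁ * Real.log L ≤ (N : ℝ) ∧ (N : ℝ) ≤ c₂ * Real.log L ∧
          (∀ N' : ℕ, 1 ≤ N' → (1 - ε ^ N') ^ L / (N' : ℝ) ≤ (1 - ε ^ N) ^ L / (N : ℝ)) ∧
          c₃ * Real.log (1 / ε) / Real.log L ≤ (1 - ε ^ N) ^ L / (N : ℝ) ∧
          (1 - ε ^ N) ^ L / (N : ℝ) ≤ c₄ * Real.log (1 / ε) / Real.log L := by
  have hε1' : (1:ℝ) < 1/ε := by
    rw [lt_div_iff₀ hε]; linarith
  set a := Real.log (1/ε) with ha_def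
  have ha : 0 < a := Real.log_pos hε1'
  have hlogε : Real.log ε = -a := by
    rw [ha_def, one_div, Real.log_inv]; ring
  have hεpow : ∀ n : ℕ, ε ^ n = Real.exp (-(a * n)) := by
    intro n
    conv_lhs => rw [← Real.exp_log hε]
    rw [← Real.exp_nat_mul, hlogε]
    ring_nf
  refine ⟨1/(2*a), 16/a, 1/16, 2, by positivity, by positivity, by norm_num, by norm_num, ?_⟩
  refine ⟨max 3 (max (⌈Real.exp a⌉₊ + 1) (⌈(864:ℝ)/a⌉₊ + 1)), ?_, ?_⟩
  · have : 3 ≤ max 3 (max (⌈Real.exp a⌉₊ + 1) (⌈(864:ℝ)/a⌉₊ + 1)) := le_max_left _ _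
    omega
  intro L hL
  have hL3 : 3 ≤ L := le_trans (le_max_left _ _) hL
  have hLexp : ⌈Real.exp a⌉₊ + 1 ≤ L := le_trans (le_trans (le_max_left _ _) (le_max_right _ _)) hL
  have hL864 : ⌈(864:ℝ)/a⌉₊ + 1 ≤ L := le_trans (le_trans (le_max_right _ _) (le_max_right _ _)) hL
  set x : ℝ := (L:ℝ) with hx_def
  have hx3 : (3:ℝ) ≤ x := by rw [hx_def]; exact_mod_cast hL3
  have hx0 : (0:ℝ) < x := by linarith
  have hxexp : Real.exp a < x := by
    have h1 : Real.exp a ≤ (⌈Real.exp a⌉₊ : ℝ) := Nat.le_ceil _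
    have h2 : ((⌈Real.exp a⌉₊ + 1 : ℕ) : ℝ) ≤ x := by rw [hx_def]; exact_mod_cast hLexp
    push_cast at h2
    linarith
  have hax : 864 < a * x := by
    have h1 : (864:ℝ)/a ≤ (⌈(864:ℝ)/a⌉₊ : ℝ) := Nat.le_ceil _
    have h2 : ((⌈(864:ℝ)/a⌉₊ + 1 : ℕ) : ℝ) ≤ x := by rw [hx_def]; exact_mod_cast hL864
    push_cast at h2
    have : (864:ℝ)/a < x := by linarith
    rw [div_lt_iff₀ ha] at this
    linarith
  set ℓ := Real.log x with hℓ_def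
  have hℓa : a ≤ ℓ := by
    have := Real.log_le_log (Real.exp_pos a) hxexp.le
    rwa [Real.log_exp] at this
  have hℓpos : 0 < ℓ := lt_of_lt_of_le ha hℓa
  have hxℓ : x = Real.exp ℓ := (Real.exp_log hx0).symm
  have hsqrt_pos : 0 < Real.sqrt x := Real.sqrt_pos.mpr hx0
  have hsqrt_eq : Real.sqrt x = Real.exp (ℓ/2) := by
    rw [hxℓ, show Real.exp ℓ = Real.exp (ℓ/2) ^ 2 by rw [sq, ← Real.exp_add]; ring_nf,
      Real.sqrt_sq (Real.exp_pos _).le]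
  have hsq : Real.sqrt x * Real.sqrt x = x := Real.mul_self_sqrt hx0.le
  -- exp(-√x) < a / (16 ℓ)
  have hexp_neg_sqrt : Real.exp (-Real.sqrt x) < a / (16*ℓ) := by
    set s := Real.sqrt x with hs_def
    have hcube : s^3 ≤ 27 * Real.exp s := aux_cube_le_exp s hsqrt_pos.le
    have hE : Real.exp (-s) * Real.exp s = 1 := by rw [← Real.exp_add]; norm_num
    have hℓ2s : ℓ ≤ 2 * s := aux_log_le_two_sqrt x (by linarith)
    have hEpos := Real.exp_pos s
    have hepos := Real.exp_pos (-s)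
    have h1 : Real.exp (-s) * s^3 ≤ 27 := by
      calc Real.exp (-s) * s^3 ≤ Real.exp (-s) * (27 * Real.exp s) := by
            apply mul_le_mul_of_nonneg_left hcube hepos.le
        _ = 27 := by rw [show Real.exp (-s) * (27 * Real.exp s) = 27 * (Real.exp (-s) * Real.exp s) by ring, hE]; ring
    have hs3 : s^3 = x * s := by
      have : s^3 = (s*s)*s := by ring
      rw [this, hsq]
    rw [hs3] at h1
    -- exp(-s) * s ≤ 27 / x, so 32 * exp(-s) * s * x ≤ 864 < a * x
    rw [lt_div_iff₀ (by positivity)]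
    -- goal : exp(-s) * (16 * ℓ) < a
    have h2 : Real.exp (-s) * (16 * ℓ) ≤ 32 * (Real.exp (-s) * s) := by nlinarith
    have h3 : 32 * (Real.exp (-s) * s) * x ≤ 864 := by nlinarith
    have h4 : 32 * (Real.exp (-s) * s) < a := by
      nlinarith [mul_pos hepos hsqrt_pos]
    linarith
  -- the candidate N* with ε^{N*} ≤ 1/x
  set Nstar : ℕ := ⌈ℓ/a⌉₊ with hNstar_def
  have hℓa_one : 1 ≤ ℓ/a := by rw [le_div_iff₀ ha]; linarith
  have hNstar1 : 1 ≤ Nstar := by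
    have : 0 < Nstar := Nat.ceil_pos.mpr (by linarith)
    omega
  have hNstar_ge : ℓ/a ≤ (Nstar:ℝ) := Nat.le_ceil _
  have hNstar_le : (Nstar:ℝ) ≤ 2*ℓ/a := by
    have h1 : (Nstar:ℝ) < ℓ/a + 1 := Nat.ceil_lt_add_one (by positivity)
    have : ℓ/a + 1 ≤ 2*ℓ/a := by
      rw [show (2:ℝ)*ℓ/a = ℓ/a + ℓ/a by ring]
      linarith
    linarith
  have hNstar_pos : (0:ℝ) < (Nstar:ℝ) := by exact_mod_cast hNstar1
  have hεNstar : ε ^ Nstar ≤ 1/x := by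
    rw [hεpow]
    have h1 : ℓ ≤ a * Nstar := by
      rw [div_le_iff₀ ha] at hNstar_ge
      linarith
    calc Real.exp (-(a * Nstar)) ≤ Real.exp (-ℓ) := by
          apply Real.exp_le_exp.mpr; linarith
      _ = 1/x := by rw [Real.exp_neg, ← hxℓ, one_div]
  -- lower bound for F(Nstar)
  have hεn_nonneg : ∀ n : ℕ, (0:ℝ) ≤ ε^n := fun n => pow_nonneg hε.le n
  have hεn_le_one : ∀ n : ℕ, ε^n ≤ 1 := fun n => pow_le_one₀ hε.le hε1.le
  have hFNstar : a/(16*ℓ) ≤ (1 - ε ^ Nstar) ^ L / (Nstar:ℝ) := by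
    have hb1 : Real.exp (-(2*(1/x))) ≤ 1 - 1/x :=
      aux_exp_neg_two_mul (1/x) (by positivity) (by rw [div_le_iff₀ hx0]; linarith)
    have hb2 : (1:ℝ) - 1/x ≤ 1 - ε ^ Nstar := by linarith
    have hpow : Real.exp (-(2*(1/x)))^L ≤ (1 - ε ^ Nstar)^L :=
      pow_le_pow_left₀ (Real.exp_pos _).le (le_trans hb1 hb2) L
    have hpow_eq : Real.exp (-(2*(1/x)))^L = Real.exp (-2) := by
      rw [← Real.exp_nat_mul]
      congr 1
      rw [hx_def]
      have hL0 : ((L:ℕ):ℝ) ≠ 0 := by rw [← hx_def]; exact hx0.ne'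
      field_simp
    have hexp2 : (1:ℝ)/8 ≤ Real.exp (-2) := by
      rw [Real.exp_neg, le_inv_comm₀ (by norm_num) (Real.exp_pos 2)]
      calc (Real.exp 2) ≤ 8 := aux_exp_two_le_eight
        _ = (1/8:ℝ)⁻¹ := by norm_num
    have hnum : (1:ℝ)/8 ≤ (1 - ε ^ Nstar)^L := by
      rw [hpow_eq] at hpow; linarith
    have hden : (Nstar:ℝ) ≤ 2*ℓ/a := hNstar_le
    calc a/(16*ℓ) = (1/8)/(2*ℓ/a) := by
          rw [div_div_eq_mul_div, div_mul_eq_mul_div, eq_div_iff (by positivity : (2*ℓ:ℝ) ≠ 0)]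
          field_simp
          ring
      _ ≤ (1 - ε ^ Nstar)^L / (Nstar:ℝ) := by
          apply div_le_div₀ (by positivity) hnum hNstar_pos hden
  -- upper bound for small n
  have hsmall : ∀ n : ℕ, 1 ≤ n → (n:ℝ) < ℓ/(2*a) →
      (1 - ε ^ n) ^ L / (n:ℝ) ≤ Real.exp (-Real.sqrt x) := by
    intro n hn1 hnlt
    have hn_pos : (0:ℝ) < (n:ℝ) := by exact_mod_cast hn1
    have h1 : a * n ≤ ℓ/2 := by
      rw [lt_div_iff₀ (by positivity)] at hnlt
      nlinarith
    have h2 : Real.exp (-(ℓ/2)) ≤ ε ^ n := by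
      rw [hεpow]
      apply Real.exp_le_exp.mpr
      linarith
    have h3 : Real.exp (-(ℓ/2)) = 1/Real.sqrt x := by
      rw [hsqrt_eq, Real.exp_neg, one_div]
    have h4 : 1 - ε ^ n ≤ 1 - 1/Real.sqrt x := by rw [← h3]; linarith
    have h5 : (1:ℝ) - 1/Real.sqrt x ≤ Real.exp (-(1/Real.sqrt x)) := by
      have := Real.add_one_le_exp (-(1/Real.sqrt x))
      linarith
    have h6 : (1 - ε ^ n)^L ≤ Real.exp (-(1/Real.sqrt x))^L := by
      apply pow_le_pow_left₀ (by linarith [hεn_le_one n]) (le_trans h4 h5) L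
    have h7 : Real.exp (-(1/Real.sqrt x))^L = Real.exp (-Real.sqrt x) := by
      rw [← Real.exp_nat_mul]
      congr 1
      rw [← hx_def]
      rw [show (x * -(1/Real.sqrt x)) = -(x / Real.sqrt x) by ring, Real.div_sqrt]
    calc (1 - ε ^ n) ^ L / (n:ℝ) ≤ (1 - ε ^ n) ^ L := by
          apply div_le_self (pow_nonneg (by linarith [hεn_le_one n]) L) (by exact_mod_cast hn1)
      _ ≤ Real.exp (-Real.sqrt x) := by rw [← h7]; exact h6
  -- the maximizer over a finite range
  set M : ℕ := ⌈16*ℓ/a⌉₊ with hM_def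
  have hNstarM : Nstar ≤ M := by
    apply Nat.ceil_le_ceil
    rw [div_le_div_iff₀ ha ha]
    nlinarith
  have hNstarS : Nstar ∈ Finset.Icc 1 M := Finset.mem_Icc.mpr ⟨hNstar1, hNstarM⟩
  obtain ⟨N, hNS, hNmax⟩ := Finset.exists_max_image (Finset.Icc 1 M)
    (fun n => (1 - ε ^ n) ^ L / (n:ℝ)) ⟨Nstar, hNstarS⟩
  have hN1 : 1 ≤ N := (Finset.mem_Icc.mp hNS).1
  have hN_pos : (0:ℝ) < (N:ℝ) := by exact_mod_cast hN1
  have hfN_ge : a/(16*ℓ) ≤ (1 - ε ^ N) ^ L / (N:ℝ) :=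
    le_trans hFNstar (hNmax Nstar hNstarS)
  have hf_le_inv : ∀ n : ℕ, 1 ≤ n → (1 - ε ^ n) ^ L / (n:ℝ) ≤ 1/(n:ℝ) := by
    intro n hn1
    have hn_pos : (0:ℝ) < (n:ℝ) := by exact_mod_cast hn1
    gcongr
    exact pow_le_one₀ (by linarith [hεn_le_one n]) (by linarith [hεn_nonneg n])
  -- global maximality
  have hglobal : ∀ n : ℕ, 1 ≤ n →
      (1 - ε ^ n) ^ L / (n:ℝ) ≤ (1 - ε ^ N) ^ L / (N:ℝ) := by
    intro n hn1
    by_cases hcase : n ≤ M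
    · exact hNmax n (Finset.mem_Icc.mpr ⟨hn1, hcase⟩)
    · push_neg at hcase
      have hMn : 16*ℓ/a ≤ (n:ℝ) := by
        have h1 : (16:ℝ)*ℓ/a ≤ (M:ℝ) := Nat.le_ceil _
        have h2 : (M:ℝ) ≤ (n:ℝ) := by exact_mod_cast hcase.le
        linarith
      have hn_pos : (0:ℝ) < (n:ℝ) := by
        have : (0:ℝ) < 16*ℓ/a := by positivity
        linarith
      have h3 : 1/(n:ℝ) ≤ a/(16*ℓ) := by
        rw [div_le_div_iff₀ hn_pos (by positivity)]
        rw [div_le_iff₀ ha] at hMn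
        nlinarith
      calc (1 - ε ^ n) ^ L / (n:ℝ) ≤ 1/(n:ℝ) := hf_le_inv n (by exact_mod_cast hn_pos)
        _ ≤ a/(16*ℓ) := h3
        _ ≤ (1 - ε ^ N) ^ L / (N:ℝ) := hfN_ge
  -- location of the maximizer
  have hN_lower : ℓ/(2*a) ≤ (N:ℝ) := by
    by_contra h
    push_neg at h
    have h1 := hsmall N hN1 h
    linarith [hexp_neg_sqrt, hfN_ge]
  have hN_upper : (N:ℝ) ≤ 16*ℓ/a := by
    have h1 : a/(16*ℓ) ≤ 1/(N:ℝ) := le_trans hfN_ge (hf_le_inv N hN1)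
    rw [div_le_div_iff₀ (by positivity) hN_pos] at h1
    rw [le_div_iff₀ ha]
    nlinarith
  have hfN_le : (1 - ε ^ N) ^ L / (N:ℝ) ≤ 2*a/ℓ := by
    have h1 : (1:ℝ)/(N:ℝ) ≤ 2*a/ℓ := by
      rw [div_le_div_iff₀ hN_pos hℓpos]
      rw [div_le_iff₀ (by positivity : (0:ℝ) < 2*a)] at hN_lower
      nlinarith
    exact le_trans (hf_le_inv N hN1) h1
  refine ⟨N, hN1, ?_, ?_, hglobal, ?_, ?_⟩
  · rw [show (1:ℝ)/(2*a) * ℓ = ℓ/(2*a) by ring] at *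
    exact hN_lower
  · rw [show (16:ℝ)/a * ℓ = 16*ℓ/a by ring]
    exact hN_upper
  · rw [show (1:ℝ)/16 * a / ℓ = a/(16*ℓ) by ring]
    exact hfN_ge
  · rw [show (2:ℝ) * a / ℓ = 2*a/ℓ by ring]
    exact hfN_le
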